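/- (Quartic growth of the Heisenberg group) Let H₃ be the group of 3×3 upper triangular integer matrices with 1's on the diagonal. For every finite generating set A of H₃ there exist constants C₁, C₂ with 0 < C₁ < C₂ such that C₁·n⁴ ≤ γ_{H₃}^A(n) ≤ C₂·n⁴ for all n ≥ 1. -/

import Mathlib

/-- The growth function of a group `G` with respect to a generating set `A`:
`growth A n` counts the elements of `G` expressible as products of at most `n`
elements of `A ∪ A⁻¹`. -/
noncomputable def growth {G : Type*} [Group G] (A : Set G) (n : ℕ) : ℕ :=
  Nat.card {g : G // ∃ l : List G, l.length ≤ n ∧ (∀ x ∈ l, x ∈ A ∪ A⁻¹) ∧ l.prod = g}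

open Matrix

/-- The discrete Heisenberg group `H₃`: the group of 3×3 upper triangular integer
matrices with 1's on the diagonal, viewed as a subgroup of `GL₃(ℤ)`. -/
def Heisenberg : Subgroup (Matrix.GeneralLinearGroup (Fin 3) ℤ) where
  carrier := {M | ((M : Matrix (Fin 3) (Fin 3) ℤ)).BlockTriangular id ∧
    ∀ i, (M : Matrix (Fin 3) (Fin 3) ℤ) i i = 1}
  one_mem' := by
    refine ⟨?_, ?_⟩
    · simpa using Matrix.blockTriangular_one (b := (id : Fin 3 → Fin 3))
    · intro i
      simp
  mul_mem' := by
    rintro M N ⟨hMt, hMd⟩ ⟨hNt, hNd⟩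
    refine ⟨?_, ?_⟩
    · simpa [Units.val_mul] using hMt.mul hNt
    · intro i
      have hco : ((M * N : Matrix.GeneralLinearGroup (Fin 3) ℤ) : Matrix (Fin 3) (Fin 3) ℤ)
          = (M : Matrix (Fin 3) (Fin 3) ℤ) * (N : Matrix (Fin 3) (Fin 3) ℤ) :=
        Units.val_mul M N
      rw [hco, Matrix.mul_apply, Finset.sum_eq_single i]
      · rw [hMd i, hNd i, one_mul]
      · intro k _ hk
        rcases lt_or_gt_of_ne hk with h | h
        · rw [hMt (show id k < id i from h), zero_mul]
        · rw [hNt (show id i < id k from h), mul_zero]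
      · intro h
        exact absurd (Finset.mem_univ i) h
  inv_mem' := by
    rintro M ⟨hMt, hMd⟩
    set Mm : Matrix (Fin 3) (Fin 3) ℤ := (M : Matrix (Fin 3) (Fin 3) ℤ) with hMm
    set N : Matrix (Fin 3) (Fin 3) ℤ := Mm - 1 with hNdef
    have hN : ∀ i j : Fin 3, j ≤ i → N i j = 0 := by
      intro i j hij
      rcases eq_or_lt_of_le hij with h | h
      · subst h
        simp [hNdef, Matrix.sub_apply, hMd j]
      · simp [hNdef, Matrix.sub_apply, hMt (show id j < id i from h),
          Matrix.one_apply_ne (ne_of_gt h)]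
    have h00 : N 0 0 = 0 := hN 0 0 (le_refl _)
    have h10 : N 1 0 = 0 := hN 1 0 (by decide)
    have h11 : N 1 1 = 0 := hN 1 1 (le_refl _)
    have h20 : N 2 0 = 0 := hN 2 0 (by decide)
    have h21 : N 2 1 = 0 := hN 2 1 (by decide)
    have h22 : N 2 2 = 0 := hN 2 2 (le_refl _)
    have hN3 : N * N * N = 0 := by
      ext i j
      fin_cases i <;> fin_cases j <;>
        simp [Matrix.mul_apply, Fin.sum_univ_three, h00, h10, h11, h20, h21, h22]
    set Cm : Matrix (Fin 3) (Fin 3) ℤ := 1 - N + N * N with hCm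
    have hM1 : Mm = 1 + N := by rw [hNdef]; abel
    have hMC : Mm * Cm = 1 := by
      have : Mm * Cm = 1 + N * N * N := by rw [hM1, hCm]; noncomm_ring
      rw [this, hN3, add_zero]
    have hval : ((M⁻¹ : Matrix.GeneralLinearGroup (Fin 3) ℤ) : Matrix (Fin 3) (Fin 3) ℤ)
        = Cm := by
      have hIM : ((M⁻¹ : Matrix.GeneralLinearGroup (Fin 3) ℤ) : Matrix (Fin 3) (Fin 3) ℤ)
          * Mm = 1 := by
        rw [hMm, ← Units.val_mul, inv_mul_cancel, Units.val_one]
      calc ((M⁻¹ : Matrix.GeneralLinearGroup (Fin 3) ℤ) : Matrix (Fin 3) (Fin 3) ℤ)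
          = ((M⁻¹ : Matrix.GeneralLinearGroup (Fin 3) ℤ) : Matrix (Fin 3) (Fin 3) ℤ)
            * (Mm * Cm) := by rw [hMC, mul_one]
        _ = (((M⁻¹ : Matrix.GeneralLinearGroup (Fin 3) ℤ) : Matrix (Fin 3) (Fin 3) ℤ)
            * Mm) * Cm := by rw [mul_assoc]
        _ = Cm := by rw [hIM, one_mul]
    constructor
    · intro i j hij
      rw [hval, hCm]
      have hZ : N i j = 0 := hN i j (le_of_lt hij)
      have hZ2 : (N * N) i j = 0 := by
        rw [Matrix.mul_apply, Finset.sum_eq_zero]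
        intro k _
        rcases le_or_gt k i with h | h
        · rw [hN i k h, zero_mul]
        · rw [hN k j (le_trans (le_of_lt hij) (le_of_lt h)), mul_zero]
      have hne : ¬ i = j := fun h => by subst h; exact lt_irrefl _ hij
      simp [Matrix.add_apply, Matrix.sub_apply, hZ, hZ2, Matrix.one_apply, hne]
    · intro i
      rw [hval, hCm]
      have hZ : N i i = 0 := hN i i (le_refl _)
      have hZ2 : (N * N) i i = 0 := by
        rw [Matrix.mul_apply, Finset.sum_eq_zero]
        intro k _
        rcases le_or_gt k i with h | h
        · rw [hN i k h, zero_mul]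
        · rw [hN k i (le_of_lt h), mul_zero]
      simp [Matrix.add_apply, Matrix.sub_apply, hZ, hZ2]

def hm (a b c : ℤ) : Matrix (Fin 3) (Fin 3) ℤ := !![1,a,b;0,1,c;0,0,1]

lemma hm_mul (a b c a' b' c' : ℤ) :
    hm a b c * hm a' b' c' = hm (a+a') (b+b'+a*c') (c+c') := by
  ext i j
  fin_cases i <;> fin_cases j <;>
    simp [hm, Matrix.mul_apply, Fin.sum_univ_three, Matrix.vecHead, Matrix.vecTail] <;> ring

lemma hm_one : hm 0 0 0 = 1 := by
  ext i j; fin_cases i <;> fin_cases j <;> simp [hm, Matrix.one_apply, Matrix.vecHead, Matrix.vecTail]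

def hu (a b c : ℤ) : Matrix.GeneralLinearGroup (Fin 3) ℤ :=
  ⟨hm a b c, hm (-a) (a*c-b) (-c),
    by rw [hm_mul]; rw [show a + -a = 0 by ring, show b + (a*c-b) + a*(-c) = 0 by ring,
      show c + -c = 0 by ring, hm_one],
    by rw [hm_mul]; rw [show -a + a = 0 by ring, show (a*c-b) + b + (-a)*c = 0 by ring,
      show -c + c = 0 by ring, hm_one]⟩

lemma hu_mem (a b c : ℤ) : hu a b c ∈ Heisenberg := by
  constructor
  · intro i j hij
    fin_cases i <;> fin_cases j <;>
      simp_all [hu, hm, Matrix.vecHead, Matrix.vecTail] <;> omega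
  · intro i
    fin_cases i <;> simp [hu, hm, Matrix.vecHead, Matrix.vecTail]

def H (a b c : ℤ) : Heisenberg := ⟨hu a b c, hu_mem a b c⟩

lemma H_mul (a b c a' b' c' : ℤ) :
    H a b c * H a' b' c' = H (a+a') (b+b'+a*c') (c+c') := by
  apply Subtype.ext; apply Units.ext
  exact hm_mul a b c a' b' c'

lemma H_one : H 0 0 0 = 1 := by
  apply Subtype.ext; apply Units.ext; exact hm_one

lemma H_inj {a b c a' b' c' : ℤ} (h : H a b c = H a' b' c') :
    a = a' ∧ b = b' ∧ c = c' := by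
  have h2 : hm a b c = hm a' b' c' := congrArg (fun x => ((x : Heisenberg) : Matrix.GeneralLinearGroup (Fin 3) ℤ).val) h
  refine ⟨?_, ?_, ?_⟩
  · have := congrFun (congrFun h2 0) 1; simpa [hm] using this
  · have := congrFun (congrFun h2 0) 2; simpa [hm, Matrix.vecHead, Matrix.vecTail] using this
  · have := congrFun (congrFun h2 1) 2; simpa [hm, Matrix.vecHead, Matrix.vecTail] using this

lemma H_surj (g : Heisenberg) :
    g = H (((g : Matrix.GeneralLinearGroup (Fin 3) ℤ) : Matrix (Fin 3) (Fin 3) ℤ) 0 1)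
          (((g : Matrix.GeneralLinearGroup (Fin 3) ℤ) : Matrix (Fin 3) (Fin 3) ℤ) 0 2)
          (((g : Matrix.GeneralLinearGroup (Fin 3) ℤ) : Matrix (Fin 3) (Fin 3) ℤ) 1 2) := by
  obtain ⟨ht, hd⟩ := g.2
  apply Subtype.ext; apply Units.ext
  ext i j
  fin_cases i <;> fin_cases j <;>
    simp [H, hu, hm, Matrix.vecHead, Matrix.vecTail] <;>
    first
      | exact hd _
      | exact ht (by decide)

lemma H_inv (a b c : ℤ) : (H a b c)⁻¹ = H (-a) (a*c-b) (-c) := by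
  symm
  apply eq_inv_of_mul_eq_one_left
  rw [H_mul, show -a + a = 0 by ring, show (a*c-b) + b + (-a)*c = 0 by ring,
    show -c + c = 0 by ring, H_one]

section Words
variable (A : Finset Heisenberg)

def W (g : Heisenberg) (n : ℕ) : Prop :=
  ∃ l : List Heisenberg, l.length ≤ n ∧
    (∀ x ∈ l, x ∈ (A : Set Heisenberg) ∪ (A : Set Heisenberg)⁻¹) ∧ l.prod = g

variable {A}

lemma W_mono {g : Heisenberg} {m n : ℕ} (h : W A g m) (hmn : m ≤ n) : W A g n := by
  obtain ⟨l, h1, h2, h3⟩ := h; exact ⟨l, le_trans h1 hmn, h2, h3⟩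

lemma W_one : W A 1 0 := ⟨[], by simp, by simp, by simp⟩

lemma W_mul {g h : Heisenberg} {m n : ℕ} (hg : W A g m) (hh : W A h n) :
    W A (g * h) (m + n) := by
  obtain ⟨l1, h1, h2, h3⟩ := hg
  obtain ⟨l2, k1, k2, k3⟩ := hh
  refine ⟨l1 ++ l2, by simp; omega, ?_, by simp [h3, k3]⟩
  intro x hx
  rcases List.mem_append.1 hx with h | h
  · exact h2 x h
  · exact k2 x h

lemma W_inv {g : Heisenberg} {n : ℕ} (hg : W A g n) : W A g⁻¹ n := by
  obtain ⟨l, h1, h2, h3⟩ := hg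
  refine ⟨(l.map fun x => x⁻¹).reverse, by simp [h1], ?_, ?_⟩
  · intro x hx
    simp only [List.mem_reverse, List.mem_map] at hx
    obtain ⟨y, hy, rfl⟩ := hx
    rcases h2 y hy with h | h
    · exact Or.inr (by simpa using h)
    · exact Or.inl (by simpa using h)
  · rw [← List.prod_inv_reverse, h3]

lemma W_pow {g : Heisenberg} {n : ℕ} (hg : W A g n) (k : ℕ) : W A (g ^ k) (k * n) := by
  induction k with
  | zero => simpa using W_one
  | succ k ih =>
      have h2 : (k+1) * n = k * n + n := by ring
      rw [pow_succ, h2]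
      exact W_mul ih hg

lemma W_zpow {g : Heisenberg} {n : ℕ} (hg : W A g n) (k : ℤ) :
    W A (g ^ k) (k.natAbs * n) := by
  rcases Int.natAbs_eq k with h | h
  · rw [h, zpow_natCast]; exact W_pow hg _
  · rw [h, _root_.zpow_neg, zpow_natCast, Int.natAbs_neg, Int.natAbs_natCast]
    exact W_inv (W_pow hg _)

end Words

def ca (g : Heisenberg) : ℤ := ((g : Matrix.GeneralLinearGroup (Fin 3) ℤ) : Matrix (Fin 3) (Fin 3) ℤ) 0 1
def cb (g : Heisenberg) : ℤ := ((g : Matrix.GeneralLinearGroup (Fin 3) ℤ) : Matrix (Fin 3) (Fin 3) ℤ) 0 2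
def cc (g : Heisenberg) : ℤ := ((g : Matrix.GeneralLinearGroup (Fin 3) ℤ) : Matrix (Fin 3) (Fin 3) ℤ) 1 2

lemma H_eq (g : Heisenberg) : g = H (ca g) (cb g) (cc g) := H_surj g

lemma ca_H (a b c : ℤ) : ca (H a b c) = a := by
  simp [ca, H, hu, hm, Matrix.vecHead, Matrix.vecTail]
lemma cb_H (a b c : ℤ) : cb (H a b c) = b := by
  simp [cb, H, hu, hm, Matrix.vecHead, Matrix.vecTail]
lemma cc_H (a b c : ℤ) : cc (H a b c) = c := by
  simp [cc, H, hu, hm, Matrix.vecHead, Matrix.vecTail]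

lemma coords_mul (g h : Heisenberg) :
    ca (g*h) = ca g + ca h ∧ cb (g*h) = cb g + cb h + ca g * cc h ∧
      cc (g*h) = cc g + cc h := by
  rw [H_eq g, H_eq h, H_mul, ca_H, cb_H, cc_H, ca_H, cb_H, cc_H, ca_H, cb_H, cc_H]
  exact ⟨rfl, rfl, rfl⟩

lemma coords_inv (g : Heisenberg) :
    ca g⁻¹ = -ca g ∧ cb g⁻¹ = ca g * cc g - cb g ∧ cc g⁻¹ = -cc g := by
  have h : g⁻¹ = H (-(ca g)) (ca g * cc g - cb g) (-(cc g)) := by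
    conv_lhs => rw [H_eq g]
    rw [H_inv]
  rw [h, ca_H, cb_H, cc_H]
  exact ⟨rfl, rfl, rfl⟩

lemma coords_one : ca 1 = 0 ∧ cb 1 = 0 ∧ cc 1 = 0 := by
  rw [← H_one, ca_H, cb_H, cc_H]; exact ⟨rfl, rfl, rfl⟩

section Upper
variable {A : Finset Heisenberg} {K : ℤ}

lemma prod_bound (hK1 : 1 ≤ K)
    (hK : ∀ s ∈ (A : Set Heisenberg) ∪ (A : Set Heisenberg)⁻¹,
      |ca s| ≤ K ∧ |cb s| ≤ K ∧ |cc s| ≤ K) :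
    ∀ l : List Heisenberg, (∀ x ∈ l, x ∈ (A : Set Heisenberg) ∪ (A : Set Heisenberg)⁻¹) →
      |ca l.prod| ≤ K * l.length ∧ |cc l.prod| ≤ K * l.length ∧
        |cb l.prod| ≤ K * l.length + K^2 * l.length^2 := by
  intro l
  induction l with
  | nil =>
      intro _
      simp [coords_one.1, coords_one.2.1, coords_one.2.2]
  | cons s l ih =>
      intro hmem
      have hs := hK s (hmem s (by simp))
      have hl := ih (fun x hx => hmem x (by simp [hx]))
      have hprod : (s :: l).prod = s * l.prod := by simp
      obtain ⟨e1, e2, e3⟩ := coords_mul s l.prod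
      rw [hprod, e1, e2, e3]
      simp only [List.length_cons]
      push_cast
      set m : ℤ := (l.length : ℤ) with hm
      have hm0 : 0 ≤ m := by positivity
      obtain ⟨ha, hb, hc⟩ := hs
      obtain ⟨pa, pc, pb⟩ := hl
      refine ⟨?_, ?_, ?_⟩
      · calc |ca s + ca l.prod| ≤ |ca s| + |ca l.prod| := abs_add_le _ _
          _ ≤ K + K * m := add_le_add ha pa
          _ = K * (m + 1) := by ring
      · calc |cc s + cc l.prod| ≤ |cc s| + |cc l.prod| := abs_add_le _ _
          _ ≤ K + K * m := add_le_add hc pc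
          _ = K * (m + 1) := by ring
      · have h1 : |cb s + cb l.prod + ca s * cc l.prod|
            ≤ |cb s| + |cb l.prod| + |ca s| * |cc l.prod| := by
          calc |cb s + cb l.prod + ca s * cc l.prod|
              ≤ |cb s + cb l.prod| + |ca s * cc l.prod| := abs_add_le _ _
            _ ≤ |cb s| + |cb l.prod| + |ca s| * |cc l.prod| := by
                rw [abs_mul]; exact add_le_add (abs_add_le _ _) le_rfl
        have h2 : |ca s| * |cc l.prod| ≤ K * (K * m) := by
          apply mul_le_mul ha pc (abs_nonneg _)
          linarith
        calc |cb s + cb l.prod + ca s * cc l.prod|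
            ≤ |cb s| + |cb l.prod| + |ca s| * |cc l.prod| := h1
          _ ≤ K + (K * m + K^2 * m^2) + K * (K * m) := by
              refine add_le_add (add_le_add hb pb) h2
          _ ≤ K * (m+1) + K^2 * (m+1)^2 := by nlinarith
end Upper

lemma x_pow (n : ℕ) : (H 1 0 0) ^ n = H n 0 0 := by
  induction n with
  | zero => simp [H_one]
  | succ n ih => rw [pow_succ, ih, H_mul]; norm_num
lemma y_pow (n : ℕ) : (H 0 0 1) ^ n = H 0 0 n := by
  induction n with
  | zero => simp [H_one]
  | succ n ih => rw [pow_succ, ih, H_mul]; norm_num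

lemma x_zpow (n : ℤ) : (H 1 0 0) ^ n = H n 0 0 := by
  rcases Int.natAbs_eq n with h | h
  · rw [h, zpow_natCast, x_pow]
  · rw [h, _root_.zpow_neg, zpow_natCast, x_pow, H_inv]; norm_num
lemma y_zpow (n : ℤ) : (H 0 0 1) ^ n = H 0 0 n := by
  rcases Int.natAbs_eq n with h | h
  · rw [h, zpow_natCast, y_pow]
  · rw [h, _root_.zpow_neg, zpow_natCast, y_pow, H_inv]; norm_num

lemma comm_eq (p q : ℤ) :
    (H 1 0 0)^p * (H 0 0 1)^q * (H 1 0 0)^(-p) * (H 0 0 1)^(-q) = H 0 (p*q) 0 := by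
  rw [x_zpow, y_zpow, x_zpow, y_zpow, H_mul, H_mul, H_mul]
  ring_nf

lemma decomp (i j B : ℤ) :
    H i (i*j + B) j = ((H 1 0 0)^i * (H 0 0 1)^j) * H 0 B 0 := by
  rw [x_zpow, y_zpow, H_mul, H_mul]
  ring_nf

section Key
variable {A : Finset Heisenberg} {L : ℕ}

lemma W_comm (hx : W A (H 1 0 0) L) (hy : W A (H 0 0 1) L) (p q : ℤ) :
    W A (H 0 (p*q) 0) ((2 * p.natAbs + 2 * q.natAbs) * L) := by
  rw [← comm_eq]
  have h := W_mul (W_mul (W_mul (W_zpow hx p) (W_zpow hy q)) (W_zpow hx (-p))) (W_zpow hy (-q))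
  convert h using 1
  simp [Int.natAbs_neg]
  ring

lemma key (m : ℕ) (hm : 1 ≤ m) (i j : ℤ)
    (hi : i.natAbs ≤ m) (hj : j.natAbs ≤ m) (k : ℕ) (hk : k < m^2)
    (hx : W A (H 1 0 0) L) (hy : W A (H 0 0 1) L) :
    W A (H i (i*j + k) j) (10 * m * L) := by
  set q : ℕ := k / m with hq
  set r : ℕ := k % m with hr
  have hqm : q < m := Nat.div_lt_of_lt_mul (by rw [← pow_two]; exact hk)
  have hrm : r < m := Nat.mod_lt _ hm
  have hkmq : (k : ℤ) = (m : ℤ) * q + r := by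
    have h : m * q + r = k := Nat.div_add_mod k m
    exact_mod_cast h.symm
  have hsplit : H 0 (k : ℤ) 0 = H 0 ((m:ℤ)*q) 0 * H 0 ((r:ℤ)*1) 0 := by
    rw [H_mul, hkmq]; norm_num
  rw [decomp, hsplit]
  have w1 : W A ((H 1 0 0)^i * (H 0 0 1)^j) ((i.natAbs + j.natAbs) * L) := by
    have := W_mul (W_zpow hx i) (W_zpow hy j)
    convert this using 1; ring
  have w2 := W_comm hx hy (m : ℤ) (q : ℤ)
  have w3 := W_comm hx hy (r : ℤ) 1
  have wtot := W_mul (W_mul w1 w2) w3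
  rw [← mul_assoc]
  apply W_mono wtot
  simp only [Int.natAbs_natCast, Int.natAbs_one]
  calc (i.natAbs + j.natAbs) * L + (2*m + 2*q) * L + (2*r + 2*1) * L
      = (i.natAbs + j.natAbs + 2*m + 2*q + 2*r + 2) * L := by ring
    _ ≤ (m + m + 2*m + 2*m + 2*m + 2*m) * L := by
        apply Nat.mul_le_mul_right; omega
    _ = 10 * m * L := by ring

end Key

noncomputable def boxU (K : ℤ) (n : ℕ) : Finset (ℤ×ℤ×ℤ) :=
  Finset.Icc (-(K*n)) (K*n) ×ˢ Finset.Icc (-(K*n + K^2*n^2)) (K*n + K^2*n^2)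
    ×ˢ Finset.Icc (-(K*n)) (K*n)

lemma boxU_card (K : ℤ) (n : ℕ) :
    (boxU K n).card = (2*(K*n)+1).toNat * ((2*(K*n + K^2*n^2)+1).toNat * (2*(K*n)+1).toNat) := by
  rw [boxU, Finset.card_product, Finset.card_product, Int.card_Icc, Int.card_Icc]
  congr 1
  · omega
  congr 1
  · omega
  · omega

lemma growth_inj (A : Finset Heisenberg) (K : ℤ) (hK1 : 1 ≤ K)
    (hKb : ∀ s ∈ (A : Set Heisenberg) ∪ (A : Set Heisenberg)⁻¹,
      |ca s| ≤ K ∧ |cb s| ≤ K ∧ |cc s| ≤ K) (n : ℕ) :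
    ∃ f : {g : Heisenberg // ∃ l : List Heisenberg, l.length ≤ n ∧
        (∀ x ∈ l, x ∈ (A : Set Heisenberg) ∪ (A : Set Heisenberg)⁻¹) ∧ l.prod = g} → boxU K n,
      Function.Injective f := by
  refine ⟨fun g => ⟨(ca g.1, cb g.1, cc g.1), ?_⟩, ?_⟩
  · obtain ⟨l, hl1, hl2, hl3⟩ := g.2
    obtain ⟨b1, b3, b2⟩ := prod_bound hK1 hKb l hl2
    rw [hl3] at b1 b2 b3
    rw [abs_le] at b1 b2 b3
    have hlen : (l.length : ℤ) ≤ n := by exact_mod_cast hl1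
    have hlen0 : (0:ℤ) ≤ (l.length : ℤ) := by positivity
    have hK0 : (0:ℤ) ≤ K := by linarith
    have h1 : K * l.length ≤ K * n := mul_le_mul_of_nonneg_left hlen hK0
    have h2 : K * l.length + K^2 * l.length^2 ≤ K * n + K^2 * n^2 := by
      have : K^2 * (l.length:ℤ)^2 ≤ K^2 * (n:ℤ)^2 := by nlinarith
      linarith
    simp only [boxU, Finset.mem_product, Finset.mem_Icc]
    exact ⟨⟨by linarith [b1.1], by linarith [b1.2]⟩,
      ⟨by linarith [b2.1], by linarith [b2.2]⟩,
      by linarith [b3.1], by linarith [b3.2]⟩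
  · intro g g' h
    simp only [Subtype.mk_eq_mk, Prod.mk.injEq] at h
    apply Subtype.ext
    rw [H_eq g.1, H_eq g'.1, h.1, h.2.1, h.2.2]

noncomputable def boxL (m : ℕ) : Finset (ℤ×ℤ×ℕ) :=
  Finset.Icc (-(m:ℤ)) (m:ℤ) ×ˢ Finset.Icc (-(m:ℤ)) (m:ℤ) ×ˢ Finset.range (m^2)

lemma boxL_card (m : ℕ) : (boxL m).card = (2*m+1) * ((2*m+1) * m^2) := by
  rw [boxL, Finset.card_product, Finset.card_product, Int.card_Icc, Finset.card_range]
  congr 2 <;> omega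


lemma growth_low_inj (A : Finset Heisenberg) (L m n : ℕ) (hm : 1 ≤ m)
    (hx : W A (H 1 0 0) L) (hy : W A (H 0 0 1) L) (hmn : 10 * m * L ≤ n) :
    ∃ f : boxL m → {g : Heisenberg // ∃ l : List Heisenberg, l.length ≤ n ∧
        (∀ x ∈ l, x ∈ (A : Set Heisenberg) ∪ (A : Set Heisenberg)⁻¹) ∧ l.prod = g},
      Function.Injective f := by
  have hW : ∀ p : ℤ×ℤ×ℕ, p ∈ boxL m → W A (H p.1 (p.1*p.2.1 + p.2.2) p.2.1) n := by
    rintro ⟨i, j, k⟩ hp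
    simp only [boxL, Finset.mem_product, Finset.mem_Icc, Finset.mem_range] at hp
    obtain ⟨⟨hi1, hi2⟩, ⟨hj1, hj2⟩, hk⟩ := hp
    have hi : i.natAbs ≤ m := by omega
    have hj : j.natAbs ≤ m := by omega
    exact W_mono (key m hm i j hi hj k hk hx hy) hmn
  refine ⟨fun p => ⟨H p.1.1 (p.1.1 * p.1.2.1 + p.1.2.2) p.1.2.1, hW p.1 p.2⟩, ?_⟩
  rintro ⟨⟨i, j, k⟩, hp⟩ ⟨⟨i', j', k'⟩, hp'⟩ h
  simp only [Subtype.mk_eq_mk] at h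
  obtain ⟨e1, e2, e3⟩ := H_inj (Subtype.mk.inj h)
  apply Subtype.ext
  simp only [Prod.mk.injEq]
  refine ⟨e1, e3, ?_⟩
  have : (k : ℤ) = k' := by rw [e1, e3] at e2; omega
  exact_mod_cast this


set_option maxHeartbeats 1000000 in
/-- **Quartic growth of the discrete Heisenberg group.** For every finite generating
set `A` of `H₃` there are constants `0 < C₁ < C₂` with
`C₁·n⁴ ≤ γ_{H₃}^A(n) ≤ C₂·n⁴` for all `n ≥ 1`. -/
theorem heisenberg_quartic_growth
    (A : Finset Heisenberg)
    (hgen : Subgroup.closure (A : Set Heisenberg) = ⊤) :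
    ∃ C₁ C₂ : ℝ, 0 < C₁ ∧ C₁ < C₂ ∧
      ∀ n : ℕ, 1 ≤ n →
        C₁ * (n : ℝ) ^ 4 ≤ (growth (A : Set Heisenberg) n : ℝ) ∧
        (growth (A : Set Heisenberg) n : ℝ) ≤ C₂ * (n : ℝ) ^ 4 := by
  classical
  -- the coordinate bound K
  set F : Heisenberg → ℕ := fun s =>
    (ca s).natAbs ⊔ (cb s).natAbs ⊔ (cc s).natAbs ⊔ (cb s⁻¹).natAbs with hF
  set K : ℤ := 1 + (A.sup F : ℕ) with hKdef
  have hK1 : 1 ≤ K := by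
    have : (0:ℤ) ≤ (A.sup F : ℕ) := Int.natCast_nonneg _
    omega
  have hKbound : ∀ s ∈ (A : Set Heisenberg) ∪ (A : Set Heisenberg)⁻¹,
      |ca s| ≤ K ∧ |cb s| ≤ K ∧ |cc s| ≤ K := by
    intro s hs
    have habs : ∀ t ∈ A, (F t : ℤ) ≤ K := by
      intro t ht
      have := Finset.le_sup (f := F) ht
      rw [hKdef]
      omega
    rcases hs with h | h
    · have h4 := habs s h
      have : ((ca s).natAbs : ℤ) ≤ K ∧ ((cb s).natAbs : ℤ) ≤ K ∧ ((cc s).natAbs : ℤ) ≤ K := by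
        simp only [hF] at h4
        push_cast at h4 ⊢
        omega
      rw [Int.abs_eq_natAbs, Int.abs_eq_natAbs, Int.abs_eq_natAbs]
      exact this
    · have hsi : s⁻¹ ∈ A := h
      have h4 := habs s⁻¹ hsi
      obtain ⟨e1, e2, e3⟩ := coords_inv s
      have hca : (ca s).natAbs = (ca s⁻¹).natAbs := by rw [e1]; simp
      have hcc : (cc s).natAbs = (cc s⁻¹).natAbs := by rw [e3]; simp
      have hcb : (cb s) = cb (s⁻¹)⁻¹ := by rw [inv_inv]
      have : ((ca s⁻¹).natAbs : ℤ) ≤ K ∧ ((cb (s⁻¹)⁻¹).natAbs : ℤ) ≤ K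
          ∧ ((cc s⁻¹).natAbs : ℤ) ≤ K := by
        simp only [hF] at h4
        push_cast at h4 ⊢
        omega
      rw [Int.abs_eq_natAbs, Int.abs_eq_natAbs, Int.abs_eq_natAbs, hca, hcc, hcb]
      exact_mod_cast this
  -- finiteness
  have hfin : ∀ n : ℕ, Finite {g : Heisenberg // ∃ l : List Heisenberg, l.length ≤ n ∧
      (∀ x ∈ l, x ∈ (A : Set Heisenberg) ∪ (A : Set Heisenberg)⁻¹) ∧ l.prod = g} := by
    intro n
    obtain ⟨f, hf⟩ := growth_inj A K hK1 hKbound n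
    exact Finite.of_injective f hf
  -- upper bound
  have upper : ∀ n : ℕ, 1 ≤ n →
      (growth (A : Set Heisenberg) n : ℝ) ≤ (45 * (K:ℝ)^4) * (n:ℝ)^4 := by
    intro n hn
    obtain ⟨f, hf⟩ := growth_inj A K hK1 hKbound n
    have hcard : growth (A : Set Heisenberg) n ≤ (boxU K n).card := by
      rw [growth, ← Nat.card_eq_finsetCard]
      exact Nat.card_le_card_of_injective f hf
    rw [boxU_card] at hcard
    have hn1 : (1:ℝ) ≤ (n:ℝ) := by exact_mod_cast hn
    have hK1R : (1:ℝ) ≤ (K:ℝ) := by exact_mod_cast hK1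
    have hKn : (0:ℤ) ≤ K * n := by positivity
    have hKn2 : (0:ℤ) ≤ K * n + K^2 * n^2 := by positivity
    have e1 : (((2*(K*n)+1).toNat : ℤ) : ℝ) = 2*(K:ℝ)*n+1 := by
      rw [Int.toNat_of_nonneg (by omega)]; push_cast; ring
    have e2 : (((2*(K*n + K^2*n^2)+1).toNat : ℤ) : ℝ) = 2*((K:ℝ)*n + (K:ℝ)^2*n^2)+1 := by
      rw [Int.toNat_of_nonneg (by omega)]; push_cast; ring
    have f1 : (2*(K:ℝ)*n+1) ≤ 3*(K:ℝ)*n := by nlinarith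
    have f2 : (2*((K:ℝ)*n + (K:ℝ)^2*n^2)+1) ≤ 5*(K:ℝ)^2*n^2 := by nlinarith
    have hcR : (growth (A : Set Heisenberg) n : ℝ)
        ≤ (2*(K:ℝ)*n+1) * ((2*((K:ℝ)*n + (K:ℝ)^2*n^2)+1) * (2*(K:ℝ)*n+1)) := by
      have := (Nat.cast_le (α := ℝ)).2 hcard
      push_cast at this
      rw [← e1, ← e2] at *
      exact_mod_cast this
    calc (growth (A : Set Heisenberg) n : ℝ)
        ≤ (2*(K:ℝ)*n+1) * ((2*((K:ℝ)*n + (K:ℝ)^2*n^2)+1) * (2*(K:ℝ)*n+1)) := hcR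
      _ ≤ (3*(K:ℝ)*n) * ((5*(K:ℝ)^2*n^2) * (3*(K:ℝ)*n)) := by
          apply mul_le_mul f1 _ (by positivity) (by positivity)
          apply mul_le_mul f2 f1 (by positivity) (by positivity)
      _ = (45 * (K:ℝ)^4) * (n:ℝ)^4 := by ring
  -- generators: words for x and y
  have hword : ∀ g : Heisenberg, ∃ l : List Heisenberg,
      (∀ x ∈ l, x ∈ (A : Set Heisenberg) ∪ (A : Set Heisenberg)⁻¹) ∧ l.prod = g := by
    intro g
    have hg : g ∈ Subgroup.closure (A : Set Heisenberg) := by rw [hgen]; trivial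
    have hg2 : g ∈ Submonoid.closure ((A : Set Heisenberg) ∪ (A : Set Heisenberg)⁻¹) := by
      rw [← Subgroup.closure_toSubmonoid]
      exact hg
    exact Submonoid.exists_list_of_mem_closure hg2
  obtain ⟨lx, hlx, hlxp⟩ := hword (H 1 0 0)
  obtain ⟨ly, hly, hlyp⟩ := hword (H 0 0 1)
  set L : ℕ := max lx.length ly.length + 1 with hLdef
  have hL1 : 1 ≤ L := by omega
  have hx : W A (H 1 0 0) L :=
    ⟨lx, by have := le_max_left lx.length ly.length; omega, hlx, hlxp⟩
  have hy : W A (H 0 0 1) L :=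
    ⟨ly, by have := le_max_right lx.length ly.length; omega, hly, hlyp⟩
  clear_value L
  clear_value K
  -- lower bound
  have lower : ∀ n : ℕ, 1 ≤ n →
      ((n:ℝ) / (20*(L:ℝ)))^4 ≤ (growth (A : Set Heisenberg) n : ℝ) := by
    intro n hn
    set m : ℕ := n / (10*L) with hmdef
    have hL0 : 0 < 10*L := by omega
    have hLR : (1:ℝ) ≤ (L:ℝ) := by exact_mod_cast hL1
    have hgpos : 1 ≤ growth (A : Set Heisenberg) n := by
      have : Nonempty {g : Heisenberg // ∃ l : List Heisenberg, l.length ≤ n ∧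
          (∀ x ∈ l, x ∈ (A : Set Heisenberg) ∪ (A : Set Heisenberg)⁻¹) ∧ l.prod = g} :=
        ⟨⟨1, [], by simp, by simp, by simp⟩⟩
      have := hfin n
      rw [growth]
      exact Nat.card_pos
    rcases Nat.eq_zero_or_pos m with hm0 | hm1
    · -- small n
      have hnlt : n < 10*L := by
        by_contra hc
        push_neg at hc
        have : 1 ≤ m := Nat.one_le_div_iff hL0 |>.2 hc
        omega
      have h1 : (n:ℝ) / (20*(L:ℝ)) ≤ 1 := by
        rw [div_le_one (by positivity)]
        have : (n:ℝ) < 10*L := by exact_mod_cast hnlt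
        linarith
      have h0 : (0:ℝ) ≤ (n:ℝ) / (20*(L:ℝ)) := by positivity
      have := pow_le_one₀ h0 h1 (n := 4)
      have hg : (1:ℝ) ≤ (growth (A : Set Heisenberg) n : ℝ) := by exact_mod_cast hgpos
      linarith
    · -- main case
      have hmn : 10 * m * L ≤ n := by
        calc 10 * m * L = m * (10 * L) := by ring
          _ ≤ n := Nat.div_mul_le_self n (10*L)
      obtain ⟨f, hf⟩ := growth_low_inj A L m n hm1 hx hy hmn
      have hcard : (boxL m).card ≤ growth (A : Set Heisenberg) n := by
        rw [growth, ← Nat.card_eq_finsetCard]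
        exact @Nat.card_le_card_of_injective _ _ (hfin n) f hf
      rw [boxL_card] at hcard
      have hm4 : m^4 ≤ (2*m+1) * ((2*m+1) * m^2) := by nlinarith
      have hup : (n:ℝ) / (20*(L:ℝ)) ≤ (m:ℝ) := by
        have hlt : n < (m+1) * (10*L) := by
          have : n / (10*L) < m + 1 := by omega
          exact (Nat.div_lt_iff_lt_mul hL0).1 this
        have hle : (m+1) * (10*L) ≤ (2*m) * (10*L) := by
          apply Nat.mul_le_mul_right
          omega
        have hcast : (n:ℝ) < 20 * (L:ℝ) * (m:ℝ) := by
          have h2 : n < 2*m*(10*L) := lt_of_lt_of_le hlt hle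
          have h3 := (Nat.cast_lt (α := ℝ)).2 h2
          push_cast at h3
          linarith
        have hmR : (1:ℝ) ≤ (m:ℝ) := by exact_mod_cast hm1
        rw [div_le_iff₀ (by positivity)]
        nlinarith
      calc ((n:ℝ) / (20*(L:ℝ)))^4 ≤ (m:ℝ)^4 :=
            pow_le_pow_left₀ (by positivity) hup 4
        _ ≤ (((2*m+1) * ((2*m+1) * m^2) : ℕ) : ℝ) := by exact_mod_cast hm4
        _ ≤ (growth (A : Set Heisenberg) n : ℝ) := by exact_mod_cast hcard
  -- assemble
  refine ⟨(1/(20*(L:ℝ)))^4, 45 * (K:ℝ)^4, by positivity, ?_, ?_⟩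
  · have hLR : (1:ℝ) ≤ (L:ℝ) := by exact_mod_cast hL1
    have hKR : (1:ℝ) ≤ (K:ℝ) := by exact_mod_cast hK1
    have h1 : (1/(20*(L:ℝ)))^4 ≤ ((1:ℝ)/20)^4 := by
      apply pow_le_pow_left₀ (by positivity)
      rw [div_le_div_iff₀ (by positivity) (by norm_num)]
      linarith
    have h2 : (45:ℝ) ≤ 45 * (K:ℝ)^4 := by
      have := one_le_pow₀ hKR (n := 4)
      linarith
    calc (1/(20*(L:ℝ)))^4 ≤ (1/20)^4 := h1
      _ < 45 := by norm_num
      _ ≤ 45 * (K:ℝ)^4 := h2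
  · intro n hn
    refine ⟨?_, upper n hn⟩
    have := lower n hn
    have heq : (1/(20*(L:ℝ)))^4 * (n:ℝ)^4 = ((n:ℝ) / (20*(L:ℝ)))^4 := by
      rw [div_pow, div_pow]
      ring
    rw [heq]
    exact this
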